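/- Let J ≥ 3 and a, b ≥ 1 with H(a,J) ≥ aJ+1. Then H(a+b,J) ≤ H(a,J) + H(b,J) − ⌈(H(a,J) − aJ)/(aJ − 1)⌉ and H(2a,J) ≤ 2·H(a,J) − 2·⌈(H(a,J) − aJ)/(aJ − 1)⌉. -/

import Mathlib

/-- A finite set of naturals is a Golomb ruler: all differences of
distinct pairs are distinct. -/
def IsGolomb (A : Finset ℕ) : Prop :=
  ∀ a ∈ A, ∀ b ∈ A, ∀ c ∈ A, ∀ d ∈ A,
    a ≠ b → c ≠ d → (a : ℤ) - b = (c : ℤ) - d → a = c ∧ b = d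

/-- `F` is a family of `I` pairwise disjoint `J`-element Golomb rulers,
each contained in `{1, ..., n}`: an `(I,J,n)`-DGR. -/
def IsDGR (I J n : ℕ) (F : Fin I → Finset ℕ) : Prop :=
  (∀ i, (F i).card = J) ∧ (∀ i, IsGolomb (F i)) ∧
  (∀ i, F i ⊆ Finset.Icc 1 n) ∧
  (∀ i j, i ≠ j → Disjoint (F i) (F j))

/-- `H I J` is the least positive `n` such that an `(I,J,n)`-DGR exists. -/
noncomputable def H (I J : ℕ) : ℕ :=
  sInf {n | 0 < n ∧ ∃ F : Fin I → Finset ℕ, IsDGR I J n F}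

/-- `A` contains `I` pairwise disjoint `J`-element Golomb rulers. -/
def HasDGRin (I J : ℕ) (A : Finset ℕ) : Prop :=
  ∃ F : Fin I → Finset ℕ,
    (∀ i, (F i).card = J) ∧ (∀ i, IsGolomb (F i)) ∧
    (∀ i, F i ⊆ A) ∧ (∀ i j, i ≠ j → Disjoint (F i) (F j))

/-- The defining set for `Y I J`. -/
def YSet (I J : ℕ) : Set ℕ :=
  {n | 0 < n ∧ ∀ A : Finset ℕ, (∀ a ∈ A, 0 < a) → A.card = n → HasDGRin I J A}

/-- `Y I J` is the least positive `n` such that every set of `n`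
positive integers contains `I` disjoint `J`-element Golomb rulers. -/
noncomputable def Y (I J : ℕ) : ℕ := sInf (YSet I J)

lemma aux_isGolomb_image {R : Finset ℕ} (hR : IsGolomb R) (ψ : ℕ → ℕ) (ρ : ℤ → ℤ)
    (hrec : ∀ x ∈ R, ∀ y ∈ R, ρ ((ψ x : ℤ) - (ψ y : ℤ)) = (x : ℤ) - y) :
    IsGolomb (R.image ψ) := by
  intro α hα β hβ γ hγ δ hδ hαβ hγδ heq
  simp only [Finset.mem_image] at hα hβ hγ hδ
  obtain ⟨x, hx, rfl⟩ := hα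
  obtain ⟨y, hy, rfl⟩ := hβ
  obtain ⟨z, hz, rfl⟩ := hγ
  obtain ⟨t, ht, rfl⟩ := hδ
  have hxy : (x : ℤ) - y = (z : ℤ) - t := by
    have h1 := hrec x hx y hy
    have h2 := hrec z hz t ht
    rw [← h1, ← h2, heq]
  have hxyne : x ≠ y := fun h => hαβ (by rw [h])
  have hztne : z ≠ t := fun h => hγδ (by rw [h])
  obtain ⟨h3, h4⟩ := hR x hx y hy z hz t ht hxyne hztne hxy
  exact ⟨by rw [h3], by rw [h4]⟩

lemma aux_transform {I J : ℕ} (F : Fin I → Finset ℕ) (S : Finset ℕ)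
    (hsub : ∀ i, F i ⊆ S)
    (hcard : ∀ i, (F i).card = J) (hg : ∀ i, IsGolomb (F i))
    (hd : ∀ i j, i ≠ j → Disjoint (F i) (F j))
    (ψ : ℕ → ℕ) (ρ : ℤ → ℤ)
    (hinj : ∀ x ∈ S, ∀ y ∈ S, ψ x = ψ y → x = y)
    (hrec : ∀ x ∈ S, ∀ y ∈ S, ρ ((ψ x : ℤ) - (ψ y : ℤ)) = (x : ℤ) - y)
    (T : Finset ℕ) (himg : ∀ x ∈ S, ψ x ∈ T) :
    (∀ i, ((F i).image ψ).card = J) ∧ (∀ i, IsGolomb ((F i).image ψ)) ∧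
      (∀ i, (F i).image ψ ⊆ T) ∧
      (∀ i j, i ≠ j → Disjoint ((F i).image ψ) ((F j).image ψ)) := by
  refine ⟨?_, ?_, ?_, ?_⟩
  · intro i
    rw [Finset.card_image_of_injOn, hcard]
    intro x hx y hy h
    exact hinj x (hsub i hx) y (hsub i hy) h
  · intro i
    exact aux_isGolomb_image (hg i) ψ ρ (fun x hx y hy => hrec x (hsub i hx) y (hsub i hy))
  · intro i z hz
    obtain ⟨x, hx, rfl⟩ := Finset.mem_image.mp hz
    exact himg x (hsub i hx)
  · intro i j hij
    rw [Finset.disjoint_left]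
    intro z hz1 hz2
    obtain ⟨x, hx, rfl⟩ := Finset.mem_image.mp hz1
    obtain ⟨y, hy, hyx⟩ := Finset.mem_image.mp hz2
    have hxy : y = x := hinj y (hsub j hy) x (hsub i hx) hyx
    subst hxy
    exact (Finset.disjoint_left.mp (hd i j hij)) hx hy

lemma aux_combine {I1 I2 J N : ℕ} (F1 : Fin I1 → Finset ℕ) (F2 : Fin I2 → Finset ℕ)
    (h1c : ∀ i, (F1 i).card = J) (h2c : ∀ i, (F2 i).card = J)
    (h1g : ∀ i, IsGolomb (F1 i)) (h2g : ∀ i, IsGolomb (F2 i))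
    (h1s : ∀ i, F1 i ⊆ Finset.Icc 1 N) (h2s : ∀ i, F2 i ⊆ Finset.Icc 1 N)
    (h1d : ∀ i j, i ≠ j → Disjoint (F1 i) (F1 j))
    (h2d : ∀ i j, i ≠ j → Disjoint (F2 i) (F2 j))
    (hcross : ∀ i j, Disjoint (F1 i) (F2 j)) :
    ∃ F : Fin (I1 + I2) → Finset ℕ, IsDGR (I1 + I2) J N F := by
  refine ⟨fun i => if h : (i : ℕ) < I1 then F1 ⟨i, h⟩ else
    F2 ⟨(i : ℕ) - I1, by have := i.isLt; omega⟩, ?_, ?_, ?_, ?_⟩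
  · intro i; dsimp only; split_ifs with h
    · exact h1c _
    · exact h2c _
  · intro i; dsimp only; split_ifs with h
    · exact h1g _
    · exact h2g _
  · intro i; dsimp only; split_ifs with h
    · exact h1s _
    · exact h2s _
  · intro i j hij; dsimp only; split_ifs with hi hj hj
    · apply h1d
      intro hc
      simp only [Fin.mk.injEq] at hc
      exact hij (Fin.ext hc)
    · exact hcross _ _
    · exact (hcross _ _).symm
    · apply h2d
      intro hc
      simp only [Fin.mk.injEq] at hc
      exact hij (Fin.ext (by omega))

lemma aux_pow4_lt {x y u : ℕ} (hx : x < u) (hy : y < u) : 4 ^ x + 4 ^ y < 4 ^ u := by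
  have h1 : 4 ^ x ≤ 4 ^ (u - 1) := Nat.pow_le_pow_right (by norm_num) (by omega)
  have h2 : 4 ^ y ≤ 4 ^ (u - 1) := Nat.pow_le_pow_right (by norm_num) (by omega)
  have h3 : 4 ^ u = 4 * 4 ^ (u - 1) := by
    conv_lhs => rw [show u = (u - 1) + 1 by omega]
    rw [pow_succ]; ring
  have h4 : 1 ≤ 4 ^ (u - 1) := Nat.one_le_pow _ _ (by norm_num)
  omega

lemma aux_pow4_helper {i l k j : ℕ} (hik : i < k) (h : 4 ^ i + 4 ^ l = 4 ^ k + 4 ^ j) :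
    i = j ∧ l = k := by
  have hinj := Nat.pow_right_injective (by norm_num : 2 ≤ 4)
  rcases Nat.lt_trichotomy l k with hlk | hlk | hlk
  · exact absurd h (by have h5 := aux_pow4_lt hik hlk; have h6 : 0 < 4 ^ j := Nat.pow_pos (by norm_num); intro hcon; linarith)
  · subst hlk
    have h' : 4 ^ i = 4 ^ j := by linarith
    exact ⟨hinj h', rfl⟩
  · rcases Nat.lt_trichotomy j l with hjl | hjl | hjl
    · have h5 := aux_pow4_lt hlk hjl
      have h6 : 0 ≤ 4 ^ i := Nat.zero_le _
      linarith
    · subst hjl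
      have h' : 4 ^ i = 4 ^ k := by linarith
      exact absurd (hinj h') (by omega)
    · have hil : i < j := by omega
      have h5 := aux_pow4_lt hil (by omega : l < j)
      have h6 : 0 ≤ 4 ^ k := Nat.zero_le _
      linarith

lemma aux_pow4_sum {i l k j : ℕ} (h : 4 ^ i + 4 ^ l = 4 ^ k + 4 ^ j) :
    (i = k ∧ l = j) ∨ (i = j ∧ l = k) := by
  have hinj := Nat.pow_right_injective (by norm_num : 2 ≤ 4)
  rcases Nat.lt_trichotomy i k with hik | hik | hik
  · exact Or.inr (aux_pow4_helper hik h)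
  · subst hik
    have h' : 4 ^ l = 4 ^ j := by linarith
    exact Or.inl ⟨rfl, hinj h'⟩
  · obtain ⟨h1, h2⟩ := aux_pow4_helper hik h.symm
    exact Or.inr ⟨h2.symm, h1.symm⟩

lemma aux_base_ruler (J : ℕ) (hJ : 1 ≤ J) :
    ∃ R : Finset ℕ, R.card = J ∧ IsGolomb R ∧ R ⊆ Finset.Icc 1 (4 ^ (J - 1)) := by
  have hinj := Nat.pow_right_injective (by norm_num : 2 ≤ 4)
  refine ⟨(Finset.range J).image (fun j => 4 ^ j), ?_, ?_, ?_⟩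
  · rw [Finset.card_image_of_injective _ hinj, Finset.card_range]
  · intro α hα β hβ γ hγ δ hδ hab hcd heq
    simp only [Finset.mem_image, Finset.mem_range] at hα hβ hγ hδ
    obtain ⟨i, hi, rfl⟩ := hα
    obtain ⟨j, hj, rfl⟩ := hβ
    obtain ⟨k, hk, rfl⟩ := hγ
    obtain ⟨l, hl, rfl⟩ := hδ
    have hsum : (4:ℕ) ^ i + 4 ^ l = 4 ^ k + 4 ^ j := by
      have heq' := heq
      push_cast at heq'
      have h5 : ((4:ℤ)) ^ i + 4 ^ l = 4 ^ k + 4 ^ j := by linarith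
      exact_mod_cast h5
    rcases aux_pow4_sum hsum with ⟨h1, h2⟩ | ⟨h1, h2⟩
    · exact ⟨by rw [h1], by rw [h2]⟩
    · exact absurd (by rw [h1]) hab
  · intro z hz
    simp only [Finset.mem_image, Finset.mem_range] at hz
    obtain ⟨j, hj, rfl⟩ := hz
    simp only [Finset.mem_Icc]
    exact ⟨Nat.one_le_pow _ _ (by norm_num), Nat.pow_le_pow_right (by norm_num) (by omega)⟩

lemma aux_stack {J C : ℕ} (I : ℕ) (R : Finset ℕ) (hc : R.card = J)
    (hg : IsGolomb R) (hs : R ⊆ Finset.Icc 1 C) :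
    ∃ F : Fin I → Finset ℕ, IsDGR I J (I * C) F := by
  refine ⟨fun i => R.image (fun x => x + (i : ℕ) * C), ?_, ?_, ?_, ?_⟩
  · intro i
    rw [Finset.card_image_of_injective _ (add_left_injective _), hc]
  · intro i
    apply aux_isGolomb_image hg _ (fun d => d)
    intro x _ y _
    push_cast
    ring
  · intro i z hz
    obtain ⟨x, hx, rfl⟩ := Finset.mem_image.mp hz
    have hxb := Finset.mem_Icc.mp (hs hx)
    have hiI : (i : ℕ) + 1 ≤ I := i.isLt
    have h2 : ((i : ℕ) + 1) * C ≤ I * C := Nat.mul_le_mul_right C hiI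
    simp only [Finset.mem_Icc]
    constructor
    · omega
    · have h3 : (i:ℕ) * C + C ≤ I * C := by
        calc (i:ℕ) * C + C = ((i:ℕ) + 1) * C := by ring
        _ ≤ I * C := h2
      omega
  · intro i j hij
    rw [Finset.disjoint_left]
    intro z hz1 hz2
    obtain ⟨x, hx, hxe⟩ := Finset.mem_image.mp hz1
    obtain ⟨y, hy, hye⟩ := Finset.mem_image.mp hz2
    have hxb := Finset.mem_Icc.mp (hs hx)
    have hyb := Finset.mem_Icc.mp (hs hy)
    have hvij : (i : ℕ) ≠ (j : ℕ) := fun h => hij (Fin.ext h)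
    rcases Nat.lt_or_ge (i : ℕ) (j : ℕ) with hlt | hge
    · have : ((i:ℕ) + 1) * C ≤ (j:ℕ) * C := Nat.mul_le_mul_right C hlt
      rw [Nat.add_mul, Nat.one_mul] at this
      omega
    · have hlt : (j : ℕ) < (i : ℕ) := by omega
      have : ((j:ℕ) + 1) * C ≤ (i:ℕ) * C := Nat.mul_le_mul_right C hlt
      rw [Nat.add_mul, Nat.one_mul] at this
      omega

lemma aux_HSet_nonempty (I J : ℕ) (hI : 1 ≤ I) (hJ : 1 ≤ J) :
    {n | 0 < n ∧ ∃ F : Fin I → Finset ℕ, IsDGR I J n F}.Nonempty := by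
  obtain ⟨R, hc, hg, hs⟩ := aux_base_ruler J hJ
  obtain ⟨F, hF⟩ := aux_stack I R hc hg hs
  refine ⟨I * 4 ^ (J - 1), ?_, F, hF⟩
  have : 0 < 4 ^ (J - 1) := Nat.pow_pos (by norm_num)
  exact Nat.mul_pos (by omega) this

lemma aux_H_le {I J N : ℕ} (hN : 0 < N) (h : ∃ F : Fin I → Finset ℕ, IsDGR I J N F) :
    H I J ≤ N := Nat.sInf_le ⟨hN, h⟩

lemma aux_H_mem (I J : ℕ) (hI : 1 ≤ I) (hJ : 1 ≤ J) :
    0 < H I J ∧ ∃ F : Fin I → Finset ℕ, IsDGR I J (H I J) F :=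
  Nat.sInf_mem (aux_HSet_nonempty I J hI hJ)

lemma aux_optimal (I J : ℕ) (hI : 1 ≤ I) (hJ3 : 3 ≤ J) (hbig : I * J + 1 ≤ H I J) :
    ∃ F : Fin I → Finset ℕ, IsDGR I J (H I J) F ∧
      1 ∈ Finset.univ.biUnion F ∧ H I J ∈ Finset.univ.biUnion F ∧
      (Finset.univ.biUnion F).card = I * J := by
  obtain ⟨hpos, F, hF⟩ := aux_H_mem I J hI (by omega)
  obtain ⟨hc, hg, hs, hd⟩ := hF
  set m := H I J with hm
  have hm4 : 4 ≤ m := by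
    have : 3 ≤ I * J := le_trans hJ3 (le_mul_of_one_le_left (by omega) hI)
    omega
  have hHdef : H I J = sInf {n | 0 < n ∧ ∃ F : Fin I → Finset ℕ, IsDGR I J n F} := rfl
  have hmin : m - 1 ∉ {n | 0 < n ∧ ∃ F : Fin I → Finset ℕ, IsDGR I J n F} :=
    Nat.notMem_of_lt_sInf (by rw [← hHdef]; omega)
  have hcard : (Finset.univ.biUnion F).card = I * J := by
    rw [Finset.card_biUnion (fun i _ j _ hij => hd i j hij)]
    simp [hc, Finset.sum_const, Finset.card_univ, mul_comm]
  have h1mem : 1 ∈ Finset.univ.biUnion F := by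
    by_contra h1
    have hge2 : ∀ i, ∀ x ∈ F i, 2 ≤ x ∧ x ≤ m := by
      intro i x hx
      have hxi := Finset.mem_Icc.mp (hs i hx)
      have : x ≠ 1 := by
        intro hx1
        exact h1 (Finset.mem_biUnion.mpr ⟨i, Finset.mem_univ i, hx1 ▸ hx⟩)
      omega
    have hsub2 : ∀ i, F i ⊆ Finset.Icc 2 m := by
      intro i x hx
      exact Finset.mem_Icc.mpr (hge2 i x hx)
    obtain ⟨hc', hg', hs', hd'⟩ := aux_transform F (Finset.Icc 2 m) hsub2 hc hg hd
      (fun x => x - 1) (fun d => d)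
      (by intro x hx y hy hxy
          have h1 := Finset.mem_Icc.mp hx
          have h2 := Finset.mem_Icc.mp hy
          omega)
      (by intro x hx y hy
          have h1 := Finset.mem_Icc.mp hx
          have h2 := Finset.mem_Icc.mp hy
          omega)
      (Finset.Icc 1 (m - 1))
      (by intro x hx
          have h1 := Finset.mem_Icc.mp hx
          simp only [Finset.mem_Icc]
          omega)
    exact hmin ⟨by omega, fun i => (F i).image (fun x => x - 1), hc', hg', hs', hd'⟩
  have hmmem : m ∈ Finset.univ.biUnion F := by
    by_contra hmm
    have hsub2 : ∀ i, F i ⊆ Finset.Icc 1 (m - 1) := by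
      intro i x hx
      have hxi := Finset.mem_Icc.mp (hs i hx)
      have : x ≠ m := by
        intro hx1
        exact hmm (Finset.mem_biUnion.mpr ⟨i, Finset.mem_univ i, hx1 ▸ hx⟩)
      simp only [Finset.mem_Icc]
      omega
    exact hmin ⟨by omega, F, hc, hg, hsub2, hd⟩
  exact ⟨F, ⟨hc, hg, hs, hd⟩, h1mem, hmmem, hcard⟩

lemma aux_gap (S : Finset ℕ) (m c W : ℕ) (hS : S ⊆ Finset.Icc 1 m)
    (h1 : 1 ∈ S) (hm : m ∈ S) (hcard : S.card ≤ c + 1) (hcW : c * W ≤ m - 2)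
    (hm2 : 2 ≤ m) :
    ∃ p q, p ∈ S ∧ q ∈ S ∧ p + W + 1 ≤ q ∧ (∀ z ∈ S, z ≤ p ∨ q ≤ z) := by
  classical
  set T := S.filter (· < m) with hT
  have hTm : ∀ x ∈ T, x ∈ S ∧ x < m := by
    intro x hx
    exact Finset.mem_filter.mp hx
  set nxt : ℕ → ℕ := fun x =>
    if hx : (S.filter (fun y => x < y)).Nonempty then (S.filter (fun y => x < y)).min' hx
    else 0 with hnxt
  have hnxt_spec : ∀ x, x < m → nxt x ∈ S ∧ x < nxt x ∧ (∀ z ∈ S, x < z → nxt x ≤ z) := by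
    intro x hxm
    have hne : (S.filter (fun y => x < y)).Nonempty :=
      ⟨m, Finset.mem_filter.mpr ⟨hm, hxm⟩⟩
    have h1' : nxt x = (S.filter (fun y => x < y)).min' hne := by
      simp only [hnxt, dif_pos hne]
    have hmem := Finset.min'_mem (S.filter (fun y => x < y)) hne
    rw [← h1'] at hmem
    have hmem' := Finset.mem_filter.mp hmem
    refine ⟨hmem'.1, hmem'.2, ?_⟩
    intro z hz hxz
    have : z ∈ S.filter (fun y => x < y) := Finset.mem_filter.mpr ⟨hz, hxz⟩
    rw [h1']
    exact Finset.min'_le _ _ this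
  by_cases hex : ∃ x ∈ T, x + W + 1 ≤ nxt x
  · obtain ⟨x, hxT, hxW⟩ := hex
    obtain ⟨hxS, hxm⟩ := hTm x hxT
    obtain ⟨hq1, hq2, hq3⟩ := hnxt_spec x hxm
    refine ⟨x, nxt x, hxS, hq1, hxW, ?_⟩
    intro z hz
    rcases le_or_gt z x with h | h
    · exact Or.inl h
    · exact Or.inr (hq3 z hz h)
  · push_neg at hex
    exfalso
    have hcover : Finset.Ioc 1 m ⊆ T.biUnion (fun x => Finset.Ioc x (x + W)) := by
      intro z hz
      have hz' := Finset.mem_Ioc.mp hz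
      have hne : (S.filter (· < z)).Nonempty := ⟨1, Finset.mem_filter.mpr ⟨h1, by omega⟩⟩
      set x := (S.filter (· < z)).max' hne with hxdef
      have hxmem := Finset.mem_filter.mp ((S.filter (· < z)).max'_mem hne)
      have hxm : x < m := lt_of_lt_of_le hxmem.2 hz'.2
      have hxT : x ∈ T := Finset.mem_filter.mpr ⟨hxmem.1, hxm⟩
      obtain ⟨hq1, hq2, _⟩ := hnxt_spec x hxm
      have hzn : z ≤ nxt x := by
        by_contra hcon
        push_neg at hcon
        have : nxt x ∈ S.filter (· < z) := Finset.mem_filter.mpr ⟨hq1, hcon⟩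
        have := Finset.le_max' _ _ this
        omega
      have hW := hex x hxT
      refine Finset.mem_biUnion.mpr ⟨x, hxT, Finset.mem_Ioc.mpr ⟨hxmem.2, by omega⟩⟩
    have h6 : (Finset.Ioc 1 m).card = m - 1 := by
      rw [Nat.card_Ioc]
    have h7 : (T.biUnion (fun x => Finset.Ioc x (x + W))).card ≤ T.card * W := by
      refine le_trans Finset.card_biUnion_le ?_
      have : ∀ x ∈ T, (Finset.Ioc x (x + W)).card = W := by
        intro x _
        rw [Nat.card_Ioc]
        omega
      rw [Finset.sum_congr rfl this, Finset.sum_const, smul_eq_mul]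
    have hT8 : T.card ≤ c := by
      have hsub : T ⊆ S.erase m := by
        intro z hz
        obtain ⟨hz1, hz2⟩ := hTm z hz
        exact Finset.mem_erase.mpr ⟨by omega, hz1⟩
      have := Finset.card_le_card hsub
      rw [Finset.card_erase_of_mem hm] at this
      omega
    have h9 := Finset.card_le_card hcover
    have h10 : T.card * W ≤ c * W := Nat.mul_le_mul_right W hT8
    omega

lemma aux_C2 {a b J m n p g s W : ℕ}
    (FA : Fin a → Finset ℕ) (FB : Fin b → Finset ℕ)
    (hAc : ∀ i, (FA i).card = J) (hAg : ∀ i, IsGolomb (FA i))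
    (hAd : ∀ i j, i ≠ j → Disjoint (FA i) (FA j))
    (hAsub : ∀ i, FA i ⊆ (Finset.Icc 1 m).filter (fun x => x ≤ p ∨ p + g + 1 ≤ x))
    (hBc : ∀ i, (FB i).card = J) (hBg : ∀ i, IsGolomb (FB i))
    (hBd : ∀ i j, i ≠ j → Disjoint (FB i) (FB j))
    (hBsub : ∀ i, FB i ⊆ Finset.Icc 1 n)
    (hm : m = p + g + s) (hp1 : 1 ≤ p) (hs1 : 1 ≤ s)
    (hWg : W ≤ g) (hW1 : 1 ≤ W) (hWn : 2 * W + 1 ≤ n)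
    (hpn : p + n ≤ m + 1) :
    ∃ F : Fin (a + b) → Finset ℕ, IsDGR (a + b) J (m + n - W) F := by
  classical
  obtain ⟨hc', hg', hs', hd'⟩ := aux_transform FB (Finset.Icc 1 n) hBsub hBc hBg hBd
    (fun x => if x ≤ n - W then x + m else x + p - (n - W))
    (fun d => if ((n : ℤ) - W) ≤ d then d - ((m : ℤ) + n - p - W)
      else if d ≤ -((n : ℤ) - W) then d + ((m : ℤ) + n - p - W) else d)
    (by intro x hx y hy hxy
        have h1 := Finset.mem_Icc.mp hx
        have h2 := Finset.mem_Icc.mp hy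
        split_ifs at hxy <;> omega)
    (by intro x hx y hy
        have h1 := Finset.mem_Icc.mp hx
        have h2 := Finset.mem_Icc.mp hy
        split_ifs <;> omega)
    ((Finset.Icc 1 (m + n - W)).filter (fun z => (p + 1 ≤ z ∧ z ≤ p + W) ∨ m + 1 ≤ z))
    (by intro x hx
        have h1 := Finset.mem_Icc.mp hx
        simp only [Finset.mem_filter, Finset.mem_Icc]
        split_ifs with h <;> omega)
  refine aux_combine FA _ hAc hc' hAg hg' ?_ ?_ hAd hd' ?_
  · intro i x hx
    have h1 := Finset.mem_filter.mp (hAsub i hx)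
    have h2 := Finset.mem_Icc.mp h1.1
    simp only [Finset.mem_Icc]
    omega
  · intro i
    exact (hs' i).trans (Finset.filter_subset _ _)
  · intro i j
    rw [Finset.disjoint_left]
    intro z hz1 hz2
    have h1 := Finset.mem_filter.mp (hAsub i hz1)
    have h2 := Finset.mem_Icc.mp h1.1
    have h3 := Finset.mem_filter.mp (hs' j hz2)
    have h4 := Finset.mem_Icc.mp h3.1
    rcases h1.2 with h | h <;> rcases h3.2 with h' | h' <;> omega

lemma aux_C1 {a b J m n p g s : ℕ}
    (FA : Fin a → Finset ℕ) (FB : Fin b → Finset ℕ)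
    (hAc : ∀ i, (FA i).card = J) (hAg : ∀ i, IsGolomb (FA i))
    (hAd : ∀ i j, i ≠ j → Disjoint (FA i) (FA j))
    (hAsub : ∀ i, FA i ⊆ (Finset.Icc 1 m).filter (fun x => x ≤ p ∨ p + g + 1 ≤ x))
    (hBc : ∀ i, (FB i).card = J) (hBg : ∀ i, IsGolomb (FB i))
    (hBd : ∀ i j, i ≠ j → Disjoint (FB i) (FB j))
    (hBsub : ∀ i, FB i ⊆ Finset.Icc 1 n)
    (hm : m = p + g + s) (hp1 : 1 ≤ p) (hs1 : 1 ≤ s) (hg1 : 1 ≤ g)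
    (hpn : p ≤ n + 1) (hsn : s ≤ n + 1) (hgn : g ≤ n) :
    ∃ F : Fin (a + b) → Finset ℕ, IsDGR (a + b) J (m + n - g) F := by
  classical
  obtain ⟨hAc', hAg', hAs', hAd'⟩ := aux_transform FA
    ((Finset.Icc 1 m).filter (fun x => x ≤ p ∨ p + g + 1 ≤ x)) hAsub hAc hAg hAd
    (fun x => if x ≤ p then x else x + (n - g))
    (fun d => if (n : ℤ) < d then d - ((n : ℤ) - g) else
      if d < -(n : ℤ) then d + ((n : ℤ) - g) else d)
    (by intro x hx y hy hxy
        have h1 := Finset.mem_filter.mp hx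
        have h2 := Finset.mem_Icc.mp h1.1
        have h3 := Finset.mem_filter.mp hy
        have h4 := Finset.mem_Icc.mp h3.1
        split_ifs at hxy <;> rcases h1.2 with h | h <;> rcases h3.2 with h' | h' <;> omega)
    (by intro x hx y hy
        have h1 := Finset.mem_filter.mp hx
        have h2 := Finset.mem_Icc.mp h1.1
        have h3 := Finset.mem_filter.mp hy
        have h4 := Finset.mem_Icc.mp h3.1
        split_ifs <;> rcases h1.2 with h | h <;> rcases h3.2 with h' | h' <;> omega)
    ((Finset.Icc 1 (m + n - g)).filter (fun z => z ≤ p ∨ p + n + 1 ≤ z))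
    (by intro x hx
        have h1 := Finset.mem_filter.mp hx
        have h2 := Finset.mem_Icc.mp h1.1
        simp only [Finset.mem_filter, Finset.mem_Icc]
        split_ifs with h <;> rcases h1.2 with h' | h' <;> omega)
  obtain ⟨hBc', hBg', hBs', hBd'⟩ := aux_transform FB (Finset.Icc 1 n) hBsub hBc hBg hBd
    (fun x => x + p) (fun d => d)
    (by intro x hx y hy hxy
        omega)
    (by intro x hx y hy
        omega)
    (Finset.Icc (p + 1) (p + n))
    (by intro x hx
        have h1 := Finset.mem_Icc.mp hx
        simp only [Finset.mem_Icc]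
        omega)
  refine aux_combine _ _ hAc' hBc' hAg' hBg' ?_ ?_ hAd' hBd' ?_
  · intro i
    exact (hAs' i).trans (Finset.filter_subset _ _)
  · intro i x hx
    have h1 := Finset.mem_Icc.mp (hBs' i hx)
    simp only [Finset.mem_Icc]
    omega
  · intro i j
    rw [Finset.disjoint_left]
    intro z hz1 hz2
    have h1 := Finset.mem_filter.mp (hAs' i hz1)
    have h2 := Finset.mem_Icc.mp h1.1
    have h3 := Finset.mem_Icc.mp (hBs' j hz2)
    rcases h1.2 with h | h <;> omega

lemma aux_four {a J m p g s : ℕ} (FA : Fin a → Finset ℕ)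
    (hAc : ∀ i, (FA i).card = J) (hAg : ∀ i, IsGolomb (FA i))
    (hAd : ∀ i j, i ≠ j → Disjoint (FA i) (FA j))
    (hAsub : ∀ i, FA i ⊆ (Finset.Icc 1 m).filter (fun x => x ≤ p ∨ p + g + 1 ≤ x))
    (hm : m = p + g + s) (hp1 : 1 ≤ p) (hs1 : 1 ≤ s) (hg1 : 1 ≤ g) (hps : p ≤ s) :
    ∃ F : Fin (a + a) → Finset ℕ, IsDGR (a + a) J (2 * p + 2 * s) F := by
  classical
  obtain ⟨hAc', hAg', hAs', hAd'⟩ := aux_transform FA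
    ((Finset.Icc 1 m).filter (fun x => x ≤ p ∨ p + g + 1 ≤ x)) hAsub hAc hAg hAd
    (fun x => if x ≤ p then x else x + s - g)
    (fun d => if (s : ℤ) < d then d - s + g else if d < -(s : ℤ) then d + s - g else d)
    (by intro x hx y hy hxy
        have h1 := Finset.mem_filter.mp hx
        have h2 := Finset.mem_Icc.mp h1.1
        have h3 := Finset.mem_filter.mp hy
        have h4 := Finset.mem_Icc.mp h3.1
        split_ifs at hxy <;> rcases h1.2 with h | h <;> rcases h3.2 with h' | h' <;> omega)
    (by intro x hx y hy
        have h1 := Finset.mem_filter.mp hx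
        have h2 := Finset.mem_Icc.mp h1.1
        have h3 := Finset.mem_filter.mp hy
        have h4 := Finset.mem_Icc.mp h3.1
        split_ifs <;> rcases h1.2 with h | h <;> rcases h3.2 with h' | h' <;> omega)
    ((Finset.Icc 1 (2 * p + 2 * s)).filter (fun z => z ≤ p ∨ (p + s + 1 ≤ z ∧ z ≤ p + 2 * s)))
    (by intro x hx
        have h1 := Finset.mem_filter.mp hx
        have h2 := Finset.mem_Icc.mp h1.1
        simp only [Finset.mem_filter, Finset.mem_Icc]
        split_ifs with h <;> rcases h1.2 with h' | h' <;> omega)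
  obtain ⟨hBc', hBg', hBs', hBd'⟩ := aux_transform FA
    ((Finset.Icc 1 m).filter (fun x => x ≤ p ∨ p + g + 1 ≤ x)) hAsub hAc hAg hAd
    (fun x => if x ≤ p then (m + 1 + p + s) - (g + x) else (m + 1 + p) - x)
    (fun d => if (s : ℤ) < d then (s : ℤ) - g - d else
      if d < -(s : ℤ) then -(s : ℤ) + g - d else -d)
    (by intro x hx y hy hxy
        have h1 := Finset.mem_filter.mp hx
        have h2 := Finset.mem_Icc.mp h1.1
        have h3 := Finset.mem_filter.mp hy
        have h4 := Finset.mem_Icc.mp h3.1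
        split_ifs at hxy <;> rcases h1.2 with h | h <;> rcases h3.2 with h' | h' <;> omega)
    (by intro x hx y hy
        have h1 := Finset.mem_filter.mp hx
        have h2 := Finset.mem_Icc.mp h1.1
        have h3 := Finset.mem_filter.mp hy
        have h4 := Finset.mem_Icc.mp h3.1
        split_ifs <;> rcases h1.2 with h | h <;> rcases h3.2 with h' | h' <;> omega)
    ((Finset.Icc (p + 1) (2 * p + 2 * s)).filter (fun z => z ≤ p + s ∨ p + 2 * s + 1 ≤ z))
    (by intro x hx
        have h1 := Finset.mem_filter.mp hx
        have h2 := Finset.mem_Icc.mp h1.1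
        simp only [Finset.mem_filter, Finset.mem_Icc]
        split_ifs with h <;> rcases h1.2 with h' | h' <;> omega)
  refine aux_combine _ _ hAc' hBc' hAg' hBg' ?_ ?_ hAd' hBd' ?_
  · intro i x hx
    have h1 := Finset.mem_filter.mp (hAs' i hx)
    have h2 := Finset.mem_Icc.mp h1.1
    simp only [Finset.mem_Icc]
    omega
  · intro i x hx
    have h1 := Finset.mem_filter.mp (hBs' i hx)
    have h2 := Finset.mem_Icc.mp h1.1
    simp only [Finset.mem_Icc]
    omega
  · intro i j
    rw [Finset.disjoint_left]
    intro z hz1 hz2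
    have h1 := Finset.mem_filter.mp (hAs' i hz1)
    have h2 := Finset.mem_Icc.mp h1.1
    have h3 := Finset.mem_filter.mp (hBs' j hz2)
    have h4 := Finset.mem_Icc.mp h3.1
    rcases h1.2 with h | h <;> rcases h3.2 with h' | h' <;> omega

lemma aux_reflect {a J m p g s : ℕ} (FA : Fin a → Finset ℕ)
    (hAc : ∀ i, (FA i).card = J) (hAg : ∀ i, IsGolomb (FA i))
    (hAd : ∀ i j, i ≠ j → Disjoint (FA i) (FA j))
    (hAsub : ∀ i, FA i ⊆ (Finset.Icc 1 m).filter (fun x => x ≤ p ∨ p + g + 1 ≤ x))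
    (hm : m = p + g + s) (hp1 : 1 ≤ p) (hs1 : 1 ≤ s) :
    ∃ FA' : Fin a → Finset ℕ,
      (∀ i, (FA' i).card = J) ∧ (∀ i, IsGolomb (FA' i)) ∧
      (∀ i j, i ≠ j → Disjoint (FA' i) (FA' j)) ∧
      (∀ i, FA' i ⊆ (Finset.Icc 1 m).filter (fun x => x ≤ s ∨ s + g + 1 ≤ x)) := by
  classical
  obtain ⟨hc', hg', hs', hd'⟩ := aux_transform FA
    ((Finset.Icc 1 m).filter (fun x => x ≤ p ∨ p + g + 1 ≤ x)) hAsub hAc hAg hAd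
    (fun x => m + 1 - x) (fun d => -d)
    (by intro x hx y hy hxy
        have h1 := Finset.mem_filter.mp hx
        have h2 := Finset.mem_Icc.mp h1.1
        have h3 := Finset.mem_filter.mp hy
        have h4 := Finset.mem_Icc.mp h3.1
        omega)
    (by intro x hx y hy
        have h1 := Finset.mem_filter.mp hx
        have h2 := Finset.mem_Icc.mp h1.1
        have h3 := Finset.mem_filter.mp hy
        have h4 := Finset.mem_Icc.mp h3.1
        omega)
    ((Finset.Icc 1 m).filter (fun x => x ≤ s ∨ s + g + 1 ≤ x))
    (by intro x hx
        have h1 := Finset.mem_filter.mp hx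
        have h2 := Finset.mem_Icc.mp h1.1
        simp only [Finset.mem_filter, Finset.mem_Icc]
        rcases h1.2 with h' | h' <;> omega)
  exact ⟨_, hc', hg', hd', hs'⟩

theorem H_add_gap_bound (a b J : ℕ) (ha : 1 ≤ a) (hb : 1 ≤ b) (hJ : 3 ≤ J)
    (hn' : a * J + 1 ≤ H a J) :
    H (a + b) J ≤ H a J + H b J -
        (H a J - a * J + (a * J - 1) - 1) / (a * J - 1) ∧
    H (2 * a) J ≤ 2 * H a J -
        2 * ((H a J - a * J + (a * J - 1) - 1) / (a * J - 1)) := by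
  classical
  have hJ1 : 1 ≤ J := by omega
  have haJ3 : 3 ≤ a * J := by
    calc 3 ≤ J := hJ
    _ = 1 * J := (one_mul J).symm
    _ ≤ a * J := Nat.mul_le_mul_right J ha
  obtain ⟨FA, ⟨hAc, hAg, hAsub, hAd⟩, h1A, hmA, hcardA⟩ := aux_optimal a J ha hJ hn'
  set m := H a J with hmdef
  obtain ⟨hnpos, FB, hBc, hBg, hBsub, hBd⟩ := aux_H_mem b J hb hJ1
  set n := H b J with hndef
  set W := (m - 2) / (a * J - 1) with hWdef
  have hWnum : m - a * J + (a * J - 1) - 1 = m - 2 := by omega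
  have hWexpr : (m - a * J + (a * J - 1) - 1) / (a * J - 1) = W := by rw [hWnum]
  have hWmul : (a * J - 1) * W ≤ m - 2 := by
    rw [hWdef, mul_comm]
    exact Nat.div_mul_le_self _ _
  have hW1 : 1 ≤ W := by
    rw [hWdef]
    exact (Nat.one_le_div_iff (by omega)).mpr (by omega)
  have hSAsub : ∀ z ∈ Finset.univ.biUnion FA, 1 ≤ z ∧ z ≤ m := by
    intro z hz
    obtain ⟨i, _, hzi⟩ := Finset.mem_biUnion.mp hz
    exact Finset.mem_Icc.mp (hAsub i hzi)
  obtain ⟨p, q, hpS, hqS, hpq, hcons⟩ := aux_gap (Finset.univ.biUnion FA) m (a * J - 1) W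
    (fun z hz => Finset.mem_Icc.mpr (hSAsub z hz)) h1A hmA (by omega) hWmul (by omega)
  set g := q - p - 1 with hgdef
  have hq : q = p + g + 1 := by omega
  have hqm : q ≤ m := (hSAsub q hqS).2
  set s := m - p - g with hsdef
  have hmpgs : m = p + g + s := by omega
  have hgW : W ≤ g := by omega
  have hp1 : 1 ≤ p := (hSAsub p hpS).1
  have hs1 : 1 ≤ s := by omega
  have hAfilter : ∀ i, FA i ⊆ (Finset.Icc 1 m).filter (fun x => x ≤ p ∨ p + g + 1 ≤ x) := by
    intro i x hx
    have hxS : x ∈ Finset.univ.biUnion FA :=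
      Finset.mem_biUnion.mpr ⟨i, Finset.mem_univ i, hx⟩
    have h1 := hSAsub x hxS
    have h2 := hcons x hxS
    simp only [Finset.mem_filter, Finset.mem_Icc]
    omega
  obtain ⟨h1pos, G, hGc, hGg, hGs, hGd⟩ := aux_H_mem 1 J le_rfl hJ1
  set h1 := H 1 J with h1def
  have hh1J : J + 1 ≤ h1 := by
    have hsub0 := hGs ⟨0, by omega⟩
    have hcard0 := hGc ⟨0, by omega⟩
    have hJle : J ≤ h1 := by
      have hcc := Finset.card_le_card hsub0
      rwa [hcard0, Nat.card_Icc, Nat.add_sub_cancel] at hcc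
    by_contra hcon
    have hh1 : h1 = J := by omega
    have heq : G ⟨0, by omega⟩ = Finset.Icc 1 J := by
      apply Finset.eq_of_subset_of_card_le
      · rw [← hh1]; exact hsub0
      · rw [hcard0]
        simp [Nat.card_Icc]
    have h1m : (1 : ℕ) ∈ G ⟨0, by omega⟩ := by
      rw [heq]; simp only [Finset.mem_Icc]; omega
    have h2m : (2 : ℕ) ∈ G ⟨0, by omega⟩ := by
      rw [heq]; simp only [Finset.mem_Icc]; omega
    have h3m : (3 : ℕ) ∈ G ⟨0, by omega⟩ := by
      rw [heq]; simp only [Finset.mem_Icc]; omega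
    have hcontr := hGg ⟨0, by omega⟩ 2 h2m 1 h1m 3 h3m 2 h2m
      (by norm_num) (by norm_num) (by norm_num)
    omega
  have hh1n : h1 ≤ n := by
    refine aux_H_le hnpos ⟨fun _ : Fin 1 => FB ⟨0, by omega⟩, ?_, ?_, ?_, ?_⟩
    · intro i; exact hBc _
    · intro i; exact hBg _
    · intro i; exact hBsub _
    · intro i j hij; exact absurd (Subsingleton.elim i j) hij
  have hman : m ≤ a * h1 := by
    obtain ⟨F1, hF1⟩ := aux_stack a (G ⟨0, by omega⟩) (hGc _) (hGg _) (hGs _)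
    exact aux_H_le (Nat.mul_pos (by omega) (by omega)) ⟨F1, hF1⟩
  have h2Wn : 2 * W + 1 ≤ n := by
    have hah1 : 4 ≤ a * h1 := by
      calc 4 ≤ h1 := by omega
      _ = 1 * h1 := (one_mul h1).symm
      _ ≤ a * h1 := Nat.mul_le_mul_right h1 ha
    have hkey : 2 * (a * h1 - 2) ≤ (h1 - 1) * (a * J - 1) := by
      have ha' : (0 : ℤ) ≤ (a : ℤ) - 1 := by omega
      have ht' : (0 : ℤ) ≤ (J : ℤ) - 3 := by omega
      have he' : (0 : ℤ) ≤ (h1 : ℤ) - (J : ℤ) - 1 := by omega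
      zify [show 2 ≤ a * h1 by omega, show 1 ≤ h1 by omega, show 1 ≤ a * J by omega]
      nlinarith [mul_nonneg ha' ht', mul_nonneg ha' he', mul_nonneg ht' he',
        mul_nonneg ht' ht', mul_nonneg (mul_nonneg ha' ht') ht',
        mul_nonneg (mul_nonneg ha' ht') he']
    have hstep : 2 * W * (a * J - 1) ≤ (h1 - 1) * (a * J - 1) := by
      calc 2 * W * (a * J - 1) = 2 * ((a * J - 1) * W) := by ring
      _ ≤ 2 * (m - 2) := by omega
      _ ≤ 2 * (a * h1 - 2) := by omega
      _ ≤ (h1 - 1) * (a * J - 1) := hkey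
    have h2W : 2 * W ≤ h1 - 1 := Nat.le_of_mul_le_mul_right hstep (by omega)
    omega
  constructor
  · rw [hWexpr]
    by_cases hc1 : p + n ≤ m + 1
    · obtain ⟨F, hF⟩ := aux_C2 FA FB hAc hAg hAd hAfilter hBc hBg hBd hBsub
        hmpgs hp1 hs1 hgW hW1 h2Wn hc1
      have hle := aux_H_le (by omega : 0 < m + n - W) ⟨F, hF⟩
      omega
    · by_cases hc2 : s + n ≤ m + 1
      · obtain ⟨FA', hAc', hAg', hAd', hAfilter'⟩ :=
          aux_reflect FA hAc hAg hAd hAfilter hmpgs hp1 hs1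
        obtain ⟨F, hF⟩ := aux_C2 FA' FB hAc' hAg' hAd' hAfilter' hBc hBg hBd hBsub
          (by omega : m = s + g + p) hs1 hp1 hgW hW1 h2Wn hc2
        have hle := aux_H_le (by omega : 0 < m + n - W) ⟨F, hF⟩
        omega
      · obtain ⟨F, hF⟩ := aux_C1 FA FB hAc hAg hAd hAfilter hBc hBg hBd hBsub
          hmpgs hp1 hs1 (by omega) (by omega) (by omega) (by omega)
        have hle := aux_H_le (by omega : 0 < m + n - g) ⟨F, hF⟩
        omega
  · rw [hWexpr, show 2 * a = a + a from two_mul a]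
    by_cases hps : p ≤ s
    · obtain ⟨F, hF⟩ := aux_four FA hAc hAg hAd hAfilter hmpgs hp1 hs1 (by omega) hps
      have hle := aux_H_le (by omega : 0 < 2 * p + 2 * s) ⟨F, hF⟩
      omega
    · obtain ⟨FA', hAc', hAg', hAd', hAfilter'⟩ :=
        aux_reflect FA hAc hAg hAd hAfilter hmpgs hp1 hs1
      obtain ⟨F, hF⟩ := aux_four FA' hAc' hAg' hAd' hAfilter'
        (by omega : m = s + g + p) hs1 hp1 (by omega) (by omega)
      have hle := aux_H_le (by omega : 0 < 2 * s + 2 * p) ⟨F, hF⟩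
      omega
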